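/- Let p be a prime and R a perfect 𝔽_p-algebra, i.e. a commutative ring of characteristic p whose Frobenius endomorphism x ↦ x^p is bijective. Then for every n ≥ 1 the ring homomorphism α_n = truncate_n ∘ α : ℤR → W_n R is surjective with kernel exactly I^n; hence α_n induces a ring isomorphism ℤR/I^n ≅ W_n R, and passing to the limit a topological ring isomorphism lim_n ℤR/I^n ≅ 𝕎 R. -/

import Mathlib

noncomputable section

/-- The canonical projection `ℤR → R` from the monoid algebra of the
multiplicative monoid of `R`, sending `[r]` to `r`. -/
def piHom (R : Type*) [CommRing R] : MonoidAlgebra ℤ R →+* R :=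
  (MonoidAlgebra.lift ℤ R R (MonoidHom.id R)).toRingHom

/-- `I = ker (ℤR → R)`. -/
def Iideal (R : Type*) [CommRing R] : Ideal (MonoidAlgebra ℤ R) :=
  RingHom.ker (piHom R)

/-- The ring homomorphism `α : ℤR → 𝕎 R` with `α [r] = ⟨r⟩` (Teichmüller). -/
def alphaHom (p : ℕ) [Fact p.Prime] (R : Type*) [CommRing R] :
    MonoidAlgebra ℤ R →+* WittVector p R :=
  (MonoidAlgebra.lift ℤ (WittVector p R) R (WittVector.teichmuller p)).toRingHom

/-- The inverse limit `lim_n A ⧸ I n` as a subring of the product. -/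
def invLimQuot {A : Type*} [CommRing A] (I : ℕ → Ideal A) :
    Subring (∀ n : ℕ, A ⧸ I n) where
  carrier := {x | ∀ (n m : ℕ), n ≤ m → ∀ (hle : I m ≤ I n),
    Ideal.Quotient.factor hle (x m) = x n}
  zero_mem' := by intro n m h hle; simp
  one_mem' := by intro n m h hle; simp
  add_mem' := by
    intro a b ha hb n m h hle
    simp only [Pi.add_apply, map_add, ha n m h hle, hb n m h hle]
  mul_mem' := by
    intro a b ha hb n m h hle
    simp only [Pi.mul_apply, map_mul, ha n m h hle, hb n m h hle]
  neg_mem' := by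
    intro a ha n m h hle
    simp only [Pi.neg_apply, map_neg, ha n m h hle]

/-- Product of discrete topologies. -/
def discPiTop (ι : Type*) (X : ι → Type*) : TopologicalSpace (∀ i, X i) :=
  @Pi.topologicalSpace ι X fun _ => ⊥

/-- The projective limit topology on `lim_n A ⧸ I n` (each quotient discrete). -/
def limTop {A : Type*} [CommRing A] (I : ℕ → Ideal A) :
    TopologicalSpace (invLimQuot I) :=
  TopologicalSpace.induced Subtype.val (discPiTop ℕ fun n => A ⧸ I n)

/-- The natural topology on `𝕎 R` (`R` discrete): the product topology via
the coefficient map `𝕎 R → R^ℕ`. -/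
def wittTop (p : ℕ) (R : Type*) [CommRing R] : TopologicalSpace (WittVector p R) :=
  TopologicalSpace.induced (fun x => x.coeff) (discPiTop ℕ fun _ => R)

namespace CDproof

variable {R : Type*} [CommRing R]

/-- `[r]` -/
def om (r : R) : MonoidAlgebra ℤ R := MonoidAlgebra.of ℤ R r

@[simp] lemma pi_om (r : R) : piHom R (om r) = r := by
  simp [piHom, om]

@[simp] lemma alpha_om (p : ℕ) [Fact p.Prime] (r : R) :
    alphaHom p R (om r) = WittVector.teichmuller p r := by
  simp [alphaHom, om]

lemma single_eq_zsmul_om (r : R) (b : ℤ) :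
    (MonoidAlgebra.single r b : MonoidAlgebra ℤ R) = b • om r := by
  rw [om, MonoidAlgebra.of_apply, MonoidAlgebra.smul_single, smul_eq_mul, mul_one]

lemma ringHom_ext' {A : Type*} [Ring A] {f g : MonoidAlgebra ℤ R →+* A}
    (h : ∀ r, f (om r) = g (om r)) : f = g := by
  refine MonoidAlgebra.ringHom_ext (fun b => ?_) (fun r => h r)
  rw [single_eq_zsmul_om, map_zsmul, map_zsmul, h]

lemma om_mul (r s : R) : om r * om s = om (r * s) := by
  simp [om, ← map_mul]

lemma om_one : om (1 : R) = 1 := rfl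

lemma mem_I_iff {a : MonoidAlgebra ℤ R} : a ∈ Iideal R ↔ piHom R a = 0 := Iff.rfl

lemma sub_om_pi_mem (a : MonoidAlgebra ℤ R) : a - om (piHom R a) ∈ Iideal R := by
  simp [mem_I_iff]

/-- generating set of I -/
def Sgen (R : Type*) [CommRing R] : Set (MonoidAlgebra ℤ R) :=
  {x | (∃ r s : R, x = om r + om s - om (r + s)) ∨ x = om (0 : R)}

lemma Sgen_sub_I : Sgen R ⊆ (Iideal R : Set (MonoidAlgebra ℤ R)) := by
  rintro x (⟨r, s, rfl⟩ | rfl) <;> simp [SetLike.mem_coe, mem_I_iff]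

lemma I_eq_span : Iideal R = Ideal.span (Sgen R) := by
  refine le_antisymm ?_ (Ideal.span_le.2 Sgen_sub_I)
  intro x hx
  set J := Ideal.span (Sgen R) with hJ
  let q : MonoidAlgebra ℤ R →+* MonoidAlgebra ℤ R ⧸ J := Ideal.Quotient.mk J
  have hadd : ∀ r s : R, q (om (r + s)) = q (om r) + q (om s) := by
    intro r s
    have h1 : om r + om s - om (r + s) ∈ J :=
      Ideal.subset_span (Or.inl ⟨r, s, rfl⟩)
    have h2 := (Ideal.Quotient.eq_zero_iff_mem (I := J)).2 h1
    rw [map_sub, map_add, sub_eq_zero] at h2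
    exact h2.symm
  have hzero : q (om (0 : R)) = 0 :=
    (Ideal.Quotient.eq_zero_iff_mem (I := J)).2 (Ideal.subset_span (Or.inr rfl))
  let σ : R →+ MonoidAlgebra ℤ R ⧸ J :=
    AddMonoidHom.mk' (fun r => q (om r)) (fun r s => hadd r s)
  have key : ∀ a : MonoidAlgebra ℤ R, q a = σ (piHom R a) := by
    intro a
    induction a using MonoidAlgebra.induction_linear with
    | zero => simp
    | add f g hf hg => rw [map_add, map_add, map_add, hf, hg]
    | single r b =>
      show q (MonoidAlgebra.single r b) = σ (piHom R (MonoidAlgebra.single r b))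
      rw [single_eq_zsmul_om, map_zsmul, map_zsmul, pi_om, map_zsmul]
      rfl
  have hq : q x = 0 := by rw [key, (mem_I_iff.1 hx)]; exact hzero
  exact (Ideal.Quotient.eq_zero_iff_mem (I := J)).1 hq



section CharPStuff

variable (p : ℕ) [hp : Fact p.Prime] [CharP R p]

lemma p_mem_I : (p : MonoidAlgebra ℤ R) ∈ Iideal R := by
  rw [mem_I_iff, map_natCast, CharP.cast_eq_zero]

lemma om_pow (r : R) (n : ℕ) : om r ^ n = om (r ^ n) := by
  simp [om, ← map_pow]

lemma pow_sub_pow_mem {x e : MonoidAlgebra ℤ R} (he : e ∈ Iideal R) :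
    (x + e) ^ p - x ^ p ∈ (Iideal R) ^ 2 := by
  have hbin := add_pow_prime_eq' hp.out x e
  set S := ∑ k ∈ Finset.Ioo 0 p, x ^ k * e ^ (p - k) * ((p.choose k / p : ℕ) : MonoidAlgebra ℤ R)
    with hS
  have hSI : S ∈ Iideal R := by
    refine Ideal.sum_mem _ fun k hk => ?_
    rw [Finset.mem_Ioo] at hk
    have : e ^ (p - k) ∈ Iideal R := by
      have hpk : 0 < p - k := Nat.sub_pos_of_lt hk.2
      exact Ideal.pow_mem_of_mem _ he _ hpk
    exact Ideal.mul_mem_right _ _ (Ideal.mul_mem_left _ _ this)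
  have heq : (x + e) ^ p - x ^ p = e ^ p + p * S := by
    rw [hbin]; ring
  rw [heq, sq]
  refine add_mem ?_ (Ideal.mul_mem_mul (p_mem_I p) hSI)
  have h2 : e ^ p = e ^ 2 * e ^ (p - 2) := by
    rw [← pow_add]
    have := hp.out.two_le
    congr 1
    omega
  rw [h2, sq]
  exact Ideal.mul_mem_right _ _ (Ideal.mul_mem_mul he he)

variable (hperf : Function.Surjective fun x : R => x ^ p)

/-- the ideal of elements congruent to `p * om v` mod `I²` -/
def Taux : Ideal (MonoidAlgebra ℤ R) where
  carrier := {c | ∃ v : R, c - (p : MonoidAlgebra ℤ R) * om v ∈ (Iideal R) ^ 2}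
  zero_mem' := ⟨0, by
    refine (sub_mem (zero_mem _) ?_)
    rw [sq]; exact Ideal.mul_mem_mul (p_mem_I p) (by simp [SetLike.mem_coe, mem_I_iff])⟩
  add_mem' := by
    rintro a b ⟨u, hu⟩ ⟨v, hv⟩
    refine ⟨u + v, ?_⟩
    have hd : om u + om v - om (u + v) ∈ Iideal R := by simp [mem_I_iff]
    have h3 : (p : MonoidAlgebra ℤ R) * (om u + om v - om (u + v)) ∈ (Iideal R) ^ 2 := by
      rw [sq]; exact Ideal.mul_mem_mul (p_mem_I p) hd
    have : a + b - (p : MonoidAlgebra ℤ R) * om (u + v) =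
        (a - p * om u) + (b - p * om v) + p * (om u + om v - om (u + v)) := by ring
    rw [this]
    exact add_mem (add_mem hu hv) h3
  smul_mem' := by
    rintro a c ⟨v, hv⟩
    refine ⟨piHom R a * v, ?_⟩
    have h1 : a * om v - om (piHom R a * v) = (a - om (piHom R a)) * om v := by
      rw [sub_mul, ← om_mul]
    have h2 : (p : MonoidAlgebra ℤ R) * (a * om v - om (piHom R a * v)) ∈ (Iideal R) ^ 2 := by
      rw [sq, h1]
      exact Ideal.mul_mem_mul (p_mem_I p) (Ideal.mul_mem_right _ _ (sub_om_pi_mem a))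
    have : a • c - (p : MonoidAlgebra ℤ R) * om (piHom R a * v) =
        a * (c - p * om v) + p * (a * om v - om (piHom R a * v)) := by
      simp only [smul_eq_mul]; ring
    rw [this]
    exact add_mem (Ideal.mul_mem_left _ _ hv) h2

include hperf in
lemma Q1 : ∀ c ∈ Iideal R, ∃ v : R, c - (p : MonoidAlgebra ℤ R) * om v ∈ (Iideal R) ^ 2 := by
  haveI : ExpChar R p := ExpChar.prime hp.out
  have hgen : Sgen R ⊆ (Taux (R := R) p : Set (MonoidAlgebra ℤ R)) := by
    rintro g (⟨r, s, rfl⟩ | rfl)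
    · -- d(r,s)
      obtain ⟨r', hr'⟩ := hperf r
      obtain ⟨s', hs'⟩ := hperf s
      simp only at hr' hs'
      set a := om r' with ha
      set b := om s' with hb
      set x := om (r' + s') with hx
      have he : a + b - x ∈ Iideal R := by simp [ha, hb, hx, mem_I_iff]
      have hpow : (x + (a + b - x)) ^ p - x ^ p ∈ (Iideal R) ^ 2 := pow_sub_pow_mem p he
      rw [show x + (a + b - x) = a + b by ring] at hpow
      have hxp : x ^ p = om (r + s) := by
        rw [hx, om_pow]
        congr 1
        rw [← hr', ← hs']
        exact add_pow_char r' s' p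
      have hbin := add_pow_prime_eq' hp.out a b
      set S := ∑ k ∈ Finset.Ioo 0 p, a ^ k * b ^ (p - k) *
        ((p.choose k / p : ℕ) : MonoidAlgebra ℤ R) with hSdef
      refine ⟨-(piHom R S), ?_⟩
      have hap : a ^ p = om r := by rw [ha, om_pow, hr']
      have hbp : b ^ p = om s := by rw [hb, om_pow, hs']
      have hkey : om r + om s - om (r + s) - (p : MonoidAlgebra ℤ R) * om (-(piHom R S)) =
          ((a + b) ^ p - x ^ p) + (-(p : MonoidAlgebra ℤ R)) * (S + om (-(piHom R S))) := by
        rw [hxp, ← hap, ← hbp, hbin]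
        ring
      rw [hkey]
      refine add_mem hpow ?_
      have hmem : S + om (-(piHom R S)) ∈ Iideal R := by simp [mem_I_iff]
      rw [sq, neg_mul]
      exact neg_mem (Ideal.mul_mem_mul (p_mem_I p) hmem)
    · -- [0]
      refine ⟨0, ?_⟩
      have h0 : om (0 : R) ∈ Iideal R := by simp [mem_I_iff]
      have : om (0:R) - (p : MonoidAlgebra ℤ R) * om (0:R) =
          om (0:R) * om (0:R) - (p : MonoidAlgebra ℤ R) * om (0:R) := by
        rw [om_mul, mul_zero]
      rw [this, sq]
      exact sub_mem (Ideal.mul_mem_mul h0 h0) (Ideal.mul_mem_mul (p_mem_I p) h0)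
  intro c hc
  have : c ∈ Taux (R := R) p := by
    rw [I_eq_span] at hc
    exact Ideal.span_le.2 hgen hc
  exact this

include hperf in
lemma Qlem : ∀ n : ℕ, ∀ c ∈ (Iideal R) ^ n,
    ∃ s : R, c - (p : MonoidAlgebra ℤ R) ^ n * om s ∈ (Iideal R) ^ (n + 1) := by
  intro n
  induction n with
  | zero =>
    intro c _
    exact ⟨piHom R c, by simpa using sub_om_pi_mem c⟩
  | succ n IH =>
    intro c hc
    rw [pow_succ] at hc
    refine Submodule.mul_induction_on hc (fun x hx y hy => ?_) (fun x y hx' hy' => ?_)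
    ·
      obtain ⟨u, hu⟩ := IH x hx
      obtain ⟨v, hv⟩ := Q1 p hperf y hy
      refine ⟨u * v, ?_⟩
      have key : x * y - (p : MonoidAlgebra ℤ R) ^ (n+1) * om (u * v) =
          (x - p ^ n * om u) * y + (p ^ n * om u) * (y - p * om v) := by
        rw [← om_mul]; ring
      rw [key]
      refine add_mem ?_ ?_
      · rw [pow_succ]
        exact Ideal.mul_mem_mul hu hy
      · have h1 : (p : MonoidAlgebra ℤ R) ^ n * om u ∈ (Iideal R) ^ n :=
          Ideal.mul_mem_right _ _ (Ideal.pow_mem_pow (p_mem_I p) n)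
        have hm : (p : MonoidAlgebra ℤ R) ^ n * om u * (y - p * om v) ∈
            (Iideal R) ^ n * (Iideal R) ^ 2 := Ideal.mul_mem_mul h1 hv
        rwa [← pow_add, show n + 2 = n + 1 + 1 from rfl] at hm
    ·
      obtain ⟨s1, h1⟩ := hx'
      obtain ⟨s2, h2⟩ := hy'
      refine ⟨s1 + s2, ?_⟩
      have hd : om s1 + om s2 - om (s1 + s2) ∈ Iideal R := by simp [mem_I_iff]
      have h3 : (p : MonoidAlgebra ℤ R) ^ (n+1) * (om s1 + om s2 - om (s1 + s2)) ∈
          (Iideal R) ^ (n + 1 + 1) := by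
        rw [pow_succ]
        exact Ideal.mul_mem_mul (Ideal.pow_mem_pow (p_mem_I p) _) hd
      have : x + y - (p : MonoidAlgebra ℤ R) ^ (n+1) * om (s1 + s2) =
          (x - p ^ (n+1) * om s1) + (y - p ^ (n+1) * om s2) +
            p ^ (n+1) * (om s1 + om s2 - om (s1 + s2)) := by ring
      rw [this]
      exact add_mem (add_mem h1 h2) h3

include hperf in
lemma normalform (a : MonoidAlgebra ℤ R) (n : ℕ) :
    ∃ r : ℕ → R, a - ∑ i ∈ Finset.range n, (p : MonoidAlgebra ℤ R) ^ i * om (r i) ∈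
      (Iideal R) ^ n := by
  induction n with
  | zero => exact ⟨fun _ => 0, by simp⟩
  | succ n IH =>
    obtain ⟨r, hr⟩ := IH
    obtain ⟨s, hs⟩ := Qlem p hperf n _ hr
    refine ⟨Function.update r n s, ?_⟩
    have hsum : ∑ i ∈ Finset.range (n+1),
        (p : MonoidAlgebra ℤ R) ^ i * om (Function.update r n s i) =
        (∑ i ∈ Finset.range n, (p : MonoidAlgebra ℤ R) ^ i * om (r i)) + p ^ n * om s := by
      rw [Finset.sum_range_succ, Function.update_self]
      congr 1
      refine Finset.sum_congr rfl fun i hi => ?_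
      rw [Function.update_of_ne (Finset.mem_range.1 hi).ne]
    rw [hsum, show a - ((∑ i ∈ Finset.range n, (p : MonoidAlgebra ℤ R) ^ i * om (r i)) +
      p ^ n * om s) = (a - ∑ i ∈ Finset.range n, (p : MonoidAlgebra ℤ R) ^ i * om (r i)) -
      p ^ n * om s by ring]
    exact hs

end CharPStuff

section Witt

open WittVector

variable (p : ℕ) [hp : Fact p.Prime] [CharP R p]

lemma ghost0_coeff (x : WittVector p R) : ghostComponent 0 x = x.coeff 0 := by
  simp [WittVector.ghostComponent_apply, wittPolynomial_zero]

lemma exists_verschiebung {x : WittVector p R} (h : x.coeff 0 = 0) :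
    ∃ y, x = verschiebung y := by
  refine ⟨WittVector.mk' (fun n => x.coeff (n + 1)), ?_⟩
  ext n
  cases n with
  | zero => rw [verschiebung_coeff_zero, h]
  | succ n => rw [verschiebung_coeff_succ]

variable [PerfectRing R p]

lemma exists_p_mul {x : WittVector p R} (h : x.coeff 0 = 0) :
    ∃ y, x = (p : WittVector p R) * y := by
  obtain ⟨w, rfl⟩ := exists_verschiebung p h
  obtain ⟨z, hz⟩ := (frobenius_bijective p R).surjective w
  exact ⟨z, by rw [← hz, verschiebung_frobenius, mul_comm]⟩

lemma coeff_frob_inj {a b : R} (h : a ^ p = b ^ p) : a = b := by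
  have hinj := (PerfectRing.bijective_frobenius (R := R) (p := p)).injective
  apply hinj
  exact h

lemma exists_pn_mul : ∀ (n : ℕ) (x : WittVector p R), (∀ i < n, x.coeff i = 0) →
    ∃ y, x = (p : WittVector p R) ^ n * y := by
  intro n
  induction n with
  | zero => exact fun x _ => ⟨x, by simp⟩
  | succ n IH =>
    intro x hx
    obtain ⟨y₁, rfl⟩ := exists_p_mul p (hx 0 n.succ_pos)
    have hy₁ : ∀ i < n, y₁.coeff i = 0 := by
      intro i hi
      have h1 : ((p : WittVector p R) * y₁).coeff (i + 1) = y₁.coeff i ^ p := by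
        rw [mul_comm]
        exact mul_charP_coeff_succ y₁ i
      have h2 := hx (i + 1) (by omega)
      rw [h1] at h2
      exact coeff_frob_inj p (by rw [h2, zero_pow hp.out.ne_zero])
    obtain ⟨y, rfl⟩ := IH y₁ hy₁
    exact ⟨y, by ring⟩

lemma coeff_pn_mul : ∀ (n : ℕ) (y : WittVector p R) (i : ℕ), i < n →
    ((p : WittVector p R) ^ n * y).coeff i = 0 := by
  intro n
  induction n with
  | zero => omega
  | succ n IH =>
    intro y i hi
    have hre : (p : WittVector p R) ^ (n + 1) * y = ((p : WittVector p R) ^ n * y) * p := by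
      ring
    rw [hre]
    cases i with
    | zero => exact mul_charP_coeff_zero _
    | succ i =>
      rw [mul_charP_coeff_succ, IH y i (by omega), zero_pow hp.out.ne_zero]

lemma ker_truncate_eq (n : ℕ) :
    RingHom.ker (WittVector.truncate (p := p) (R := R) n) =
      Ideal.span {(p : WittVector p R) ^ n} := by
  ext x
  rw [WittVector.mem_ker_truncate, Ideal.mem_span_singleton]
  constructor
  · intro h
    obtain ⟨y, rfl⟩ := exists_pn_mul p n x h
    exact Dvd.intro y rfl
  · rintro ⟨y, rfl⟩
    exact fun i hi => coeff_pn_mul p n y i hi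

lemma p_mul_cancel {x y : WittVector p R} (h : (p : WittVector p R) * x = p * y) : x = y := by
  set z := x - y with hzdef
  have h0 : z * (p : WittVector p R) = 0 := by
    rw [hzdef, sub_mul, mul_comm x, mul_comm y, h, sub_self]
  have hV : verschiebung (WittVector.frobenius z) = 0 := by
    rw [verschiebung_frobenius]; exact h0
  have hF : WittVector.frobenius z = 0 := by
    ext n
    have hc : (verschiebung (WittVector.frobenius z)).coeff (n + 1) =
        (0 : WittVector p R).coeff (n + 1) := by rw [hV]
    rw [verschiebung_coeff_succ] at hc
    simp only [WittVector.zero_coeff] at hc ⊢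
    exact hc
  have hz0 : z = 0 := by
    apply (frobenius_bijective p R).injective
    rw [hF, map_zero]
  exact sub_eq_zero.1 hz0

lemma exists_teich_sum (x : WittVector p R) :
    ∀ n : ℕ, ∃ r : ℕ → R,
      x - (∑ i ∈ Finset.range n, (p : WittVector p R) ^ i * teichmuller p (r i)) ∈
        Ideal.span {(p : WittVector p R) ^ n} := by
  intro n
  induction n with
  | zero => exact ⟨fun _ => 0, by simp [Ideal.mem_span_singleton]⟩
  | succ n IH =>
    obtain ⟨r, hr⟩ := IH
    rw [Ideal.mem_span_singleton] at hr
    obtain ⟨y, hy⟩ := hr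
    have hdiff : (y - teichmuller p (y.coeff 0)).coeff 0 = 0 := by
      have := map_sub (ghostComponent (p := p) 0) y (teichmuller p (y.coeff 0))
      rw [ghost0_coeff, ghost0_coeff, ghost0_coeff] at this
      rw [this, teichmuller_coeff_zero, sub_self]
    obtain ⟨z, hz⟩ := exists_p_mul p hdiff
    refine ⟨Function.update r n (y.coeff 0), ?_⟩
    rw [Ideal.mem_span_singleton]
    have hsum : ∑ i ∈ Finset.range (n + 1),
        (p : WittVector p R) ^ i * teichmuller p (Function.update r n (y.coeff 0) i) =
        (∑ i ∈ Finset.range n, (p : WittVector p R) ^ i * teichmuller p (r i)) +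
          p ^ n * teichmuller p (y.coeff 0) := by
      rw [Finset.sum_range_succ, Function.update_self]
      congr 1
      refine Finset.sum_congr rfl fun i hi => ?_
      rw [Function.update_of_ne (Finset.mem_range.1 hi).ne]
    rw [hsum]
    refine ⟨z, ?_⟩
    have : x - ((∑ i ∈ Finset.range n, (p : WittVector p R) ^ i * teichmuller p (r i)) +
        p ^ n * teichmuller p (y.coeff 0)) =
        (p : WittVector p R) ^ n * (y - teichmuller p (y.coeff 0)) := by
      rw [mul_sub, ← hy]; ring
    rw [this, hz]; ring

end Witt

section Main

open WittVector

variable (p : ℕ) [hp : Fact p.Prime] [CharP R p] [PerfectRing R p]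

lemma ghost0_alpha (a : MonoidAlgebra ℤ R) :
    ghostComponent 0 (alphaHom p R a) = piHom R a := by
  have hcomp : (ghostComponent (p := p) (R := R) 0).comp (alphaHom p R) = piHom R := by
    refine ringHom_ext' fun r => ?_
    rw [RingHom.comp_apply, alpha_om, ghostComponent_teichmuller, pow_zero, pow_one, pi_om]
  exact RingHom.congr_fun hcomp a

lemma alpha_coeff0 (a : MonoidAlgebra ℤ R) (ha : a ∈ Iideal R) :
    (alphaHom p R a).coeff 0 = 0 := by
  rw [← ghost0_coeff, ghost0_alpha]
  exact mem_I_iff.1 ha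

lemma alpha_In {n : ℕ} {a : MonoidAlgebra ℤ R} (ha : a ∈ (Iideal R) ^ n) :
    alphaHom p R a ∈ Ideal.span {(p : WittVector p R) ^ n} := by
  have h1 : alphaHom p R a ∈ Ideal.map (alphaHom p R) ((Iideal R) ^ n) :=
    Ideal.mem_map_of_mem _ ha
  have h2 : Ideal.map (alphaHom p R) ((Iideal R) ^ n) ≤
      Ideal.span {(p : WittVector p R)} ^ n := by
    rw [Ideal.map_pow]
    refine Ideal.pow_right_mono ?_ n
    rw [Ideal.map_le_iff_le_comap]
    intro x hx
    have h0 := alpha_coeff0 p x hx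
    obtain ⟨y, hy⟩ := exists_p_mul p h0
    show alphaHom p R x ∈ Ideal.span {(p : WittVector p R)}
    rw [Ideal.mem_span_singleton]
    exact ⟨y, hy⟩
  rw [← Ideal.span_singleton_pow]
  exact h2 h1

lemma Bsum : ∀ (n : ℕ) (r : ℕ → R),
    (∑ i ∈ Finset.range n, (p : WittVector p R) ^ i * teichmuller p (r i)) ∈
      Ideal.span {(p : WittVector p R) ^ n} →
    (∑ i ∈ Finset.range n, (p : MonoidAlgebra ℤ R) ^ i * om (r i)) ∈ (Iideal R) ^ n := by
  intro n
  induction n with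
  | zero => intro r _; simp
  | succ n IH =>
    intro r hmem
    rw [Ideal.mem_span_singleton] at hmem
    obtain ⟨y, hy⟩ := hmem
    -- r 0 = 0
    have hr0 : r 0 = 0 := by
      have hg := congrArg (ghostComponent (p := p) (R := R) 0) hy
      rw [map_sum] at hg
      have hterm : ∀ i ∈ Finset.range (n + 1),
          ghostComponent 0 ((p : WittVector p R) ^ i * teichmuller p (r i)) =
            (p : R) ^ i * r i := by
        intro i _
        rw [map_mul, map_pow, map_natCast, ghostComponent_teichmuller, pow_zero, pow_one]
      rw [Finset.sum_congr rfl hterm] at hg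
      have hL : ∑ i ∈ Finset.range (n + 1), (p : R) ^ i * r i = r 0 := by
        rw [Finset.sum_range_succ']
        have : ∀ i ∈ Finset.range n, (p : R) ^ (i + 1) * r (i + 1) = 0 := by
          intro i _
          rw [CharP.cast_eq_zero R p, zero_pow (Nat.succ_ne_zero i), zero_mul]
        rw [Finset.sum_congr rfl this, Finset.sum_const_zero, pow_zero, one_mul, zero_add]
      have hR : ghostComponent 0 ((p : WittVector p R) ^ (n + 1) * y) = 0 := by
        rw [map_mul, map_pow, map_natCast, CharP.cast_eq_zero R p,
          zero_pow (Nat.succ_ne_zero n), zero_mul]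
      rw [hL, hR] at hg
      exact hg
    -- split the Witt sum
    have hsplit : ∑ i ∈ Finset.range (n + 1), (p : WittVector p R) ^ i * teichmuller p (r i) =
        (p : WittVector p R) *
          ∑ i ∈ Finset.range n, (p : WittVector p R) ^ i * teichmuller p (r (i + 1)) := by
      rw [Finset.sum_range_succ', hr0, teichmuller_zero, mul_zero, add_zero, Finset.mul_sum]
      refine Finset.sum_congr rfl fun i _ => ?_
      ring
    have hy' : (p : WittVector p R) *
        (∑ i ∈ Finset.range n, (p : WittVector p R) ^ i * teichmuller p (r (i + 1))) =
        (p : WittVector p R) * ((p : WittVector p R) ^ n * y) := by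
      rw [← hsplit, hy]; ring
    have hcan := p_mul_cancel p hy'
    have hmem' : (∑ i ∈ Finset.range n, (p : WittVector p R) ^ i * teichmuller p (r (i + 1))) ∈
        Ideal.span {(p : WittVector p R) ^ n} := by
      rw [Ideal.mem_span_singleton, hcan]
      exact ⟨y, rfl⟩
    have hIH := IH (fun i => r (i + 1)) hmem'
    -- conclude
    have hzsplit : ∑ i ∈ Finset.range (n + 1), (p : MonoidAlgebra ℤ R) ^ i * om (r i) =
        (p : MonoidAlgebra ℤ R) *
          (∑ i ∈ Finset.range n, (p : MonoidAlgebra ℤ R) ^ i * om (r (i + 1))) + om (r 0) := by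
      rw [Finset.sum_range_succ', Finset.mul_sum, pow_zero, one_mul]
      congr 1
      refine Finset.sum_congr rfl fun i _ => ?_
      ring
    rw [hzsplit]
    refine add_mem ?_ ?_
    · rw [pow_succ']
      exact Ideal.mul_mem_mul (p_mem_I p) hIH
    · have h0 : om (0 : R) ∈ Iideal R := by simp [mem_I_iff]
      have : om (r 0) = om (0 : R) ^ (n + 1) := by
        rw [om_pow, zero_pow (Nat.succ_ne_zero n), hr0]
      rw [this]
      exact Ideal.pow_mem_pow h0 _

lemma alpha_sum_om (n : ℕ) (r : ℕ → R) :
    alphaHom p R (∑ i ∈ Finset.range n, (p : MonoidAlgebra ℤ R) ^ i * om (r i)) =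
      ∑ i ∈ Finset.range n, (p : WittVector p R) ^ i * teichmuller p (r i) := by
  rw [map_sum]
  refine Finset.sum_congr rfl fun i _ => ?_
  rw [map_mul, map_pow, map_natCast, alpha_om]

lemma ker_alpha_trunc (hperf : Function.Surjective fun x : R => x ^ p) (n : ℕ) :
    RingHom.ker ((WittVector.truncate n).comp (alphaHom p R)) = (Iideal R) ^ n := by
  ext a
  rw [RingHom.mem_ker, RingHom.comp_apply]
  constructor
  · intro h
    obtain ⟨r, hr⟩ := normalform p hperf a n
    set S := ∑ i ∈ Finset.range n, (p : MonoidAlgebra ℤ R) ^ i * om (r i) with hSdef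
    have hαc : alphaHom p R (a - S) ∈ Ideal.span {(p : WittVector p R) ^ n} := alpha_In p hr
    have hker : alphaHom p R (a - S) ∈
        RingHom.ker (WittVector.truncate (p := p) (R := R) n) := by
      rw [ker_truncate_eq]; exact hαc
    rw [RingHom.mem_ker] at hker
    have htr : WittVector.truncate n (alphaHom p R S) = 0 := by
      have : alphaHom p R S = alphaHom p R a - alphaHom p R (a - S) := by
        rw [map_sub]; ring
      rw [this, map_sub, h, hker, sub_zero]
    have hSW : (∑ i ∈ Finset.range n, (p : WittVector p R) ^ i * teichmuller p (r i)) ∈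
        Ideal.span {(p : WittVector p R) ^ n} := by
      rw [← alpha_sum_om, ← ker_truncate_eq p n]
      exact htr
    have hSI : S ∈ (Iideal R) ^ n := Bsum p n r hSW
    have : a = (a - S) + S := by ring
    rw [this]
    exact add_mem hr hSI
  · intro ha
    have h1 : alphaHom p R a ∈ RingHom.ker (WittVector.truncate (p := p) (R := R) n) := by
      rw [ker_truncate_eq]
      exact alpha_In p ha
    exact RingHom.mem_ker.1 h1

lemma surj_alpha_trunc (n : ℕ) :
    Function.Surjective ((WittVector.truncate n).comp (alphaHom p R)) := by
  intro z
  obtain ⟨x, rfl⟩ := WittVector.truncate_surjective p n R z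
  obtain ⟨r, hr⟩ := exists_teich_sum p x n
  refine ⟨∑ i ∈ Finset.range n, (p : MonoidAlgebra ℤ R) ^ i * om (r i), ?_⟩
  rw [RingHom.comp_apply, alpha_sum_om]
  have : x - (∑ i ∈ Finset.range n, (p : WittVector p R) ^ i * teichmuller p (r i)) ∈
      RingHom.ker (WittVector.truncate (p := p) (R := R) n) := by
    rw [ker_truncate_eq]; exact hr
  rw [RingHom.mem_ker, map_sub, sub_eq_zero] at this
  exact this.symm

end Main
end CDproof

namespace CDproof

section Part23

open WittVector

variable {R : Type*} [CommRing R] (p : ℕ) [hp : Fact p.Prime] [CharP R p] [PerfectRing R p]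
variable (hperf : Function.Surjective fun x : R => x ^ p)

/-- the isomorphism `ℤR/Iⁿ ≃ Wₙ R`. -/
noncomputable def eqn (n : ℕ) :
    (MonoidAlgebra ℤ R ⧸ (Iideal R) ^ n) ≃+* TruncatedWittVector p n R :=
  (Ideal.quotEquivOfEq (ker_alpha_trunc p hperf n).symm).trans
    (RingHom.quotientKerEquivOfSurjective (surj_alpha_trunc p n))

lemma eqn_mk (n : ℕ) (a : MonoidAlgebra ℤ R) :
    eqn p hperf n (Ideal.Quotient.mk ((Iideal R) ^ n) a) =
      WittVector.truncate n (alphaHom p R a) := by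
  simp [eqn, RingHom.quotientKerEquivOfSurjective, RingHom.quotientKerEquivOfRightInverse]
  rfl

/-- components of the limit map -/
noncomputable def gn (n : ℕ) : WittVector p R →+* MonoidAlgebra ℤ R ⧸ (Iideal R) ^ (n + 1) :=
  ((eqn p hperf (n + 1)).symm.toRingHom).comp (WittVector.truncate (n + 1))

lemma gn_mem (x : WittVector p R) :
    (fun n => gn p hperf n x) ∈ invLimQuot (fun n => (Iideal R) ^ (n + 1)) := by
  intro n m h hle
  obtain ⟨a, ha⟩ := Ideal.Quotient.mk_surjective (gn p hperf m x)
  have hm : WittVector.truncate (m + 1) (alphaHom p R a) = WittVector.truncate (m + 1) x := by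
    have := congrArg (eqn p hperf (m + 1)) ha
    rw [eqn_mk] at this
    simpa [gn] using this
  have hn : WittVector.truncate (n + 1) (alphaHom p R a) = WittVector.truncate (n + 1) x := by
    have := congrArg (TruncatedWittVector.truncate (Nat.succ_le_succ h)) hm
    rwa [TruncatedWittVector.truncate_wittVector_truncate,
      TruncatedWittVector.truncate_wittVector_truncate] at this
  show Ideal.Quotient.factor hle (gn p hperf m x) = gn p hperf n x
  rw [← ha, Ideal.Quotient.factor_mk]
  show _ = (eqn p hperf (n + 1)).symm (WittVector.truncate (n + 1) x)
  apply (eqn p hperf (n + 1)).injective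
  rw [RingEquiv.apply_symm_apply, eqn_mk]
  exact hn

/-- the limit map `𝕎 R →+* lim ℤR/Iⁿ⁺¹` -/
noncomputable def glim : WittVector p R →+* invLimQuot (fun n => (Iideal R) ^ (n + 1)) :=
  RingHom.codRestrict (Pi.ringHom (fun n => gn p hperf n)) _ (gn_mem p hperf)

lemma glim_val (x : WittVector p R) (n : ℕ) :
    ((glim p hperf x : ∀ n, MonoidAlgebra ℤ R ⧸ (Iideal R) ^ (n + 1)) n) = gn p hperf n x := rfl

lemma glim_inj : Function.Injective (glim p hperf) := by
  intro x y hxy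
  have hn : ∀ n, WittVector.truncate (n + 1) x = WittVector.truncate (n + 1) y := by
    intro n
    have h1 : gn p hperf n x = gn p hperf n y :=
      congrFun (congrArg Subtype.val hxy) n
    have := congrArg (eqn p hperf (n + 1)) h1
    simpa [gn] using this
  ext i
  have := congrArg (fun z => TruncatedWittVector.coeff (Fin.last i) z) (hn i)
  simpa using this

lemma glim_surj : Function.Surjective (glim p hperf) := by
  intro y
  set zn : ∀ n : ℕ, TruncatedWittVector p (n + 1) R := fun n => eqn p hperf (n + 1) (y.val n)
    with hzn
  have hcompat : ∀ (n m : ℕ) (h : n ≤ m),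
      TruncatedWittVector.truncate (Nat.succ_le_succ h) (zn m) = zn n := by
    intro n m h
    obtain ⟨a, ha⟩ := Ideal.Quotient.mk_surjective (y.val m)
    have hyn : y.val n = Ideal.Quotient.mk _ a := by
      have hle : (Iideal R) ^ (m + 1) ≤ (Iideal R) ^ (n + 1) :=
        Ideal.pow_le_pow_right (Nat.succ_le_succ h)
      have := y.prop n m h hle
      rw [← ha, Ideal.Quotient.factor_mk] at this
      exact this.symm
    rw [hzn]
    simp only [← ha, hyn, eqn_mk]
    exact TruncatedWittVector.truncate_wittVector_truncate _ _
  set x : WittVector p R := WittVector.mk' (fun k => (zn k).coeff (Fin.last k)) with hx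
  have htr : ∀ n, WittVector.truncate (n + 1) x = zn n := by
    intro n
    ext i
    have hi : (i : ℕ) ≤ n := Nat.lt_succ_iff.1 i.is_lt
    have hcoeff : x.coeff i = (zn (i : ℕ)).coeff (Fin.last (i : ℕ)) := rfl
    rw [WittVector.coeff_truncate, hcoeff, ← hcompat (i : ℕ) n hi,
      TruncatedWittVector.coeff_truncate]
    congr 1
  refine ⟨x, ?_⟩
  apply Subtype.ext
  funext n
  show gn p hperf n x = y.val n
  show (eqn p hperf (n + 1)).symm (WittVector.truncate (n + 1) x) = y.val n
  rw [htr n, hzn]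
  exact (eqn p hperf (n + 1)).symm_apply_apply _

/-- the limit isomorphism -/
noncomputable def Elim : WittVector p R ≃+* invLimQuot (fun n => (Iideal R) ^ (n + 1)) :=
  RingEquiv.ofBijective (glim p hperf) ⟨glim_inj p hperf, glim_surj p hperf⟩

lemma Elim_apply (x : WittVector p R) : Elim p hperf x = glim p hperf x := rfl

lemma elim_symm_truncate (y : invLimQuot (fun n => (Iideal R) ^ (n + 1))) (n : ℕ) :
    WittVector.truncate (n + 1) ((Elim p hperf).symm y) = eqn p hperf (n + 1) (y.val n) := by
  have h1 : glim p hperf ((Elim p hperf).symm y) = y := (Elim p hperf).apply_symm_apply y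
  have h2 : gn p hperf n ((Elim p hperf).symm y) = y.val n := by
    rw [← glim_val, h1]
  have h3 : (eqn p hperf (n + 1)).symm
      (WittVector.truncate (n + 1) ((Elim p hperf).symm y)) = y.val n := h2
  rw [← h3, RingEquiv.apply_symm_apply]

end Part23
end CDproof

/-- For a perfect `𝔽_p`-algebra `R`, the map `α_n = truncate_n ∘ α : ℤR → W_n R`
is surjective with kernel `I^n`; hence `ℤR/I^n ≅ W_n R`, and in the limit
there is a topological ring isomorphism `lim_n ℤR/I^n ≅ 𝕎 R`. -/
theorem statement11 (p : ℕ) [Fact p.Prime] (R : Type*) [CommRing R] [CharP R p]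
    (hperfect : Function.Bijective fun x : R => x ^ p) :
    (∀ n : ℕ, 1 ≤ n →
      Function.Surjective ((WittVector.truncate n).comp (alphaHom p R)) ∧
      RingHom.ker ((WittVector.truncate n).comp (alphaHom p R)) = (Iideal R) ^ n) ∧
    (∀ n : ℕ, 1 ≤ n →
      ∃ e : (MonoidAlgebra ℤ R ⧸ (Iideal R) ^ n) ≃+* TruncatedWittVector p n R,
        ∀ a : MonoidAlgebra ℤ R,
          e (Ideal.Quotient.mk ((Iideal R) ^ n) a) =
            WittVector.truncate n (alphaHom p R a)) ∧
    (∃ e : invLimQuot (fun n => (Iideal R) ^ (n + 1)) ≃+* WittVector p R,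
      @Continuous _ _ (limTop fun n => (Iideal R) ^ (n + 1)) (wittTop p R) e ∧
      @Continuous _ _ (wittTop p R) (limTop fun n => (Iideal R) ^ (n + 1)) e.symm ∧
      ∀ a : MonoidAlgebra ℤ R,
        e ⟨fun n => Ideal.Quotient.mk ((Iideal R) ^ (n + 1)) a,
            by intro n m h hle; simp⟩ = alphaHom p R a) := by
  haveI : PerfectRing R p := by
    constructor
    have hfr : ⇑(_root_.frobenius R p) = fun x : R => x ^ p := funext fun x => frobenius_def p x
    exact hperfect
  have hperf : Function.Surjective fun x : R => x ^ p := hperfect.surjective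
  refine ⟨fun n _ => ⟨CDproof.surj_alpha_trunc p n, CDproof.ker_alpha_trunc p hperf n⟩,
    fun n _ => ⟨CDproof.eqn p hperf n, fun a => CDproof.eqn_mk p hperf n a⟩, ?_⟩
  refine ⟨(CDproof.Elim p hperf).symm, ?_, ?_, ?_⟩
  · -- continuity of e = Elim.symm
    letI : ∀ n, TopologicalSpace (MonoidAlgebra ℤ R ⧸ (Iideal R) ^ (n + 1)) := fun _ => ⊥
    letI : TopologicalSpace R := ⊥
    letI : TopologicalSpace (WittVector p R) := wittTop p R
    letI : TopologicalSpace (invLimQuot (fun n => (Iideal R) ^ (n + 1))) :=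
      limTop (fun n => (Iideal R) ^ (n + 1))
    apply continuous_induced_rng.2
    apply continuous_pi
    intro i
    have hfac : (fun y : invLimQuot (fun n => (Iideal R) ^ (n + 1)) =>
        ((CDproof.Elim p hperf).symm y).coeff i) =
        (fun q : MonoidAlgebra ℤ R ⧸ (Iideal R) ^ (i + 1) =>
          TruncatedWittVector.coeff (Fin.last i) (CDproof.eqn p hperf (i + 1) q)) ∘
          (fun y => y.val i) := by
      funext y
      show ((CDproof.Elim p hperf).symm y).coeff i = _
      rw [show ((CDproof.Elim p hperf).symm y).coeff i =
        (WittVector.truncate (i + 1) ((CDproof.Elim p hperf).symm y)).coeff (Fin.last i) by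
          rw [WittVector.coeff_truncate]; rfl]
      rw [CDproof.elim_symm_truncate p hperf y i]
      rfl
    show Continuous fun y : invLimQuot (fun n => (Iideal R) ^ (n + 1)) =>
      ((CDproof.Elim p hperf).symm y).coeff i
    rw [hfac]
    exact continuous_bot.comp ((continuous_apply i).comp continuous_induced_dom)
  · -- continuity of e.symm = Elim
    rw [RingEquiv.symm_symm]
    letI : ∀ n, TopologicalSpace (MonoidAlgebra ℤ R ⧸ (Iideal R) ^ (n + 1)) := fun _ => ⊥
    letI : TopologicalSpace R := ⊥
    letI : TopologicalSpace (WittVector p R) := wittTop p R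
    letI : TopologicalSpace (invLimQuot (fun n => (Iideal R) ^ (n + 1))) :=
      limTop (fun n => (Iideal R) ^ (n + 1))
    apply continuous_induced_rng.2
    apply continuous_pi
    intro n
    have hfac : (fun x : WittVector p R =>
        Subtype.val (CDproof.Elim p hperf x) n) =
        (fun c : Fin (n + 1) → R =>
          ((CDproof.eqn p hperf (n + 1)).symm (TruncatedWittVector.mk p c))) ∘
          (fun x (i : Fin (n + 1)) => x.coeff i) := by
      funext x
      show CDproof.gn p hperf n x = _
      show (CDproof.eqn p hperf (n + 1)).symm (WittVector.truncate (n + 1) x) = _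
      simp only [Function.comp_apply]
      congr 1
    show Continuous fun x : WittVector p R => Subtype.val (CDproof.Elim p hperf x) n
    rw [hfac]
    haveI : DiscreteTopology R := ⟨rfl⟩
    haveI : DiscreteTopology (Fin (n + 1) → R) := Pi.discreteTopology
    exact continuous_of_discreteTopology.comp
      (continuous_pi fun j => (continuous_apply ((j : ℕ))).comp continuous_induced_dom)
  · intro a
    have key : CDproof.Elim p hperf (alphaHom p R a) =
        ⟨fun n => Ideal.Quotient.mk ((Iideal R) ^ (n + 1)) a,
          by intro n m h hle; simp⟩ := by
      apply Subtype.ext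
      funext n
      show CDproof.gn p hperf n (alphaHom p R a) = Ideal.Quotient.mk ((Iideal R) ^ (n + 1)) a
      show (CDproof.eqn p hperf (n + 1)).symm
        (WittVector.truncate (n + 1) (alphaHom p R a)) = _
      rw [← CDproof.eqn_mk p hperf (n + 1) a, RingEquiv.symm_apply_apply]
    rw [← key, RingEquiv.symm_apply_apply]

end
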